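/- If Ψ is the strictly positive ground state of the Neumann operator H^N = −Δ + v on the unit cube C₁(0) with ground state energy 0, then there is a constant c₁ = (inf Ψ)^{-2} > 0 such that for all φ ∈ H¹(C₁(0)): ‖∇(φ/Ψ)‖²_{L²(C₁(0))} ≤ c₁ q(φ,φ), where q(φ,φ) = ∫ (|∇φ|² + v|φ|²). -/

import Mathlib

open MeasureTheory

noncomputable def pd {d : ℕ} (i : Fin d) (φ : (Fin d → ℝ) → ℝ) (x : Fin d → ℝ) : ℝ :=
  fderiv ℝ φ x (Pi.single i 1)

noncomputable def gradSqd {d : ℕ} (φ : (Fin d → ℝ) → ℝ) (x : Fin d → ℝ) : ℝ :=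
  ∑ i : Fin d, (pd i φ x) ^ 2

/-- The quadratic form `q(f,g) = ∫_Ω (∇f·∇g + v f g)` of `−Δ + v` on `Ω`. -/
noncomputable def qform {d : ℕ} (Ω : Set (Fin d → ℝ)) (v f g : (Fin d → ℝ) → ℝ) : ℝ :=
  ∫ x in Ω, ((∑ i : Fin d, pd i f x * pd i g x) + v x * f x * g x)

section aux

open Set

/-- A global `C¹` function equal to `t⁻¹` for `t ≥ c`. -/
noncomputable def rho (c t : ℝ) : ℝ := (2 * max t c - t) / (max t c) ^ 2

/-- The derivative of `rho c`. -/
noncomputable def rho' (c t : ℝ) : ℝ := -((max t c) ^ 2)⁻¹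

lemma rho_eq {c t : ℝ} (hc : 0 < c) (h : c ≤ t) : rho c t = t⁻¹ := by
  have ht : 0 < t := hc.trans_le h
  rw [rho, max_eq_left h]
  field_simp
  ring

lemma rho'_eq {c t : ℝ} (h : c ≤ t) : rho' c t = -(t ^ 2)⁻¹ := by
  rw [rho', max_eq_left h]

lemma rho_hasDerivAt {c : ℝ} (hc : 0 < c) (t : ℝ) : HasDerivAt (rho c) (rho' c t) t := by
  have hlin : ∀ s : ℝ, HasDerivAt (fun x : ℝ => (2 * c - x) / c ^ 2) (-(c ^ 2)⁻¹) s := by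
    intro s
    have h1 : HasDerivAt (fun x : ℝ => 2 * c - x) (-1) s := (hasDerivAt_id s).const_sub (2 * c)
    have h2 := h1.div_const (c ^ 2)
    have hval : (-1 : ℝ) / c ^ 2 = -(c ^ 2)⁻¹ := by ring
    rwa [hval] at h2
  have hceq : ∀ x ≤ c, rho c x = (2 * c - x) / c ^ 2 := fun x hx => by
    rw [rho, max_eq_right hx]
  rcases lt_trichotomy t c with h | h | h
  · have hev : (fun x : ℝ => (2 * c - x) / c ^ 2) =ᶠ[nhds t] rho c := by
      filter_upwards [eventually_lt_nhds h] with x hx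
      exact (hceq x hx.le).symm
    have := (hlin t).congr_of_eventuallyEq hev.symm
    have hr : rho' c t = -(c ^ 2)⁻¹ := by rw [rho', max_eq_right h.le]
    rwa [hr]
  · subst h
    have hIic : HasDerivWithinAt (rho t) (rho' t t) (Iic t) t := by
      have h2 := ((hlin t).hasDerivWithinAt (s := Iic t)).congr
        (fun x hx => hceq x hx) (hceq t le_rfl)
      have hr : rho' t t = -(t ^ 2)⁻¹ := rho'_eq le_rfl
      rwa [hr]
    have hIci : HasDerivWithinAt (rho t) (rho' t t) (Ici t) t := by
      have hinv := (hasDerivAt_inv (ne_of_gt hc)).hasDerivWithinAt (s := Ici t)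
      have h2 := hinv.congr (fun x hx => rho_eq hc hx) (rho_eq hc le_rfl)
      have hr : rho' t t = -(t ^ 2)⁻¹ := rho'_eq le_rfl
      rwa [hr]
    have := hIic.union hIci
    rwa [Iic_union_Ici, hasDerivWithinAt_univ] at this
  · have ht : 0 < t := hc.trans h
    have hev : (fun x : ℝ => x⁻¹) =ᶠ[nhds t] rho c := by
      filter_upwards [eventually_gt_nhds h] with x hx
      exact (rho_eq hc hx.le).symm
    have := (hasDerivAt_inv (ne_of_gt ht)).congr_of_eventuallyEq hev.symm
    rwa [rho'_eq h.le]

lemma rho'_continuous {c : ℝ} (hc : 0 < c) : Continuous (rho' c) := by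
  have h1 : Continuous fun t : ℝ => max t c := continuous_id.max continuous_const
  exact ((h1.pow 2).inv₀ (fun t => (pow_pos (hc.trans_le (le_max_right t c)) 2).ne')).neg

lemma rho_contDiff {c : ℝ} (hc : 0 < c) : ContDiff ℝ 1 (rho c) := by
  rw [contDiff_one_iff_deriv]
  constructor
  · exact fun t => (rho_hasDerivAt hc t).differentiableAt
  · have : deriv (rho c) = rho' c := funext fun t => (rho_hasDerivAt hc t).deriv
    rw [this]; exact rho'_continuous hc

lemma pd_cont {d : ℕ} (i : Fin d) {φ : (Fin d → ℝ) → ℝ} (hφ : ContDiff ℝ 1 φ) :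
    Continuous (pd i φ) := by
  have h := hφ.continuous_fderiv one_ne_zero
  exact h.clm_apply continuous_const

lemma pd_div {d : ℕ} (i : Fin d) {φ Ψ : (Fin d → ℝ) → ℝ} (hφ : ContDiff ℝ 1 φ)
    (hΨ : ContDiff ℝ 2 Ψ) {x : Fin d → ℝ} (hx : Ψ x ≠ 0) :
    pd i (fun y => φ y / Ψ y) x
      = (1 / Ψ x) * pd i φ x - (φ x / Ψ x ^ 2) * pd i Ψ x := by
  have hφd : HasFDerivAt φ (fderiv ℝ φ x) x :=
    (hφ.differentiable one_ne_zero x).hasFDerivAt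
  have hΨd : HasFDerivAt Ψ (fderiv ℝ Ψ x) x :=
    (hΨ.differentiable (by norm_num) x).hasFDerivAt
  have hinv : HasFDerivAt (fun y => (Ψ y)⁻¹) ((-(Ψ x ^ 2)⁻¹) • fderiv ℝ Ψ x) x :=
    (hasDerivAt_inv hx).comp_hasFDerivAt x hΨd
  have hdiv : HasFDerivAt (fun y => φ y * (Ψ y)⁻¹) _ x := hφd.mul hinv
  have heq : (fun y => φ y / Ψ y) = fun y => φ y * (Ψ y)⁻¹ := by
    funext y; rw [div_eq_mul_inv]
  rw [pd, heq, hdiv.fderiv]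
  simp only [ContinuousLinearMap.add_apply, ContinuousLinearMap.smul_apply, smul_eq_mul]
  rw [pd, pd]
  field_simp
  ring

lemma pd_psi {d : ℕ} (i : Fin d) {c : ℝ} {φ Ψ : (Fin d → ℝ) → ℝ} (hφ : ContDiff ℝ 1 φ)
    (hΨ : ContDiff ℝ 2 Ψ) (hc : 0 < c) (x : Fin d → ℝ) :
    pd i (fun y => φ y * φ y * rho c (Ψ y)) x
      = φ x * φ x * (rho' c (Ψ x) * pd i Ψ x) + rho c (Ψ x) * (2 * φ x * pd i φ x) := by
  have hφd : HasFDerivAt φ (fderiv ℝ φ x) x :=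
    (hφ.differentiable one_ne_zero x).hasFDerivAt
  have hΨd : HasFDerivAt Ψ (fderiv ℝ Ψ x) x :=
    (hΨ.differentiable (by norm_num) x).hasFDerivAt
  have hcomp : HasFDerivAt (fun y => rho c (Ψ y)) (rho' c (Ψ x) • fderiv ℝ Ψ x) x :=
    (rho_hasDerivAt hc (Ψ x)).comp_hasFDerivAt x hΨd
  have hmul : HasFDerivAt (fun y => φ y * φ y * rho c (Ψ y)) _ x := (hφd.mul hφd).mul hcomp
  rw [pd, hmul.fderiv]
  simp only [ContinuousLinearMap.add_apply, ContinuousLinearMap.smul_apply, smul_eq_mul, Pi.mul_apply]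
  rw [pd, pd]
  ring

end aux

/-- If `Ψ` is the strictly positive ground state of the Neumann operator `−Δ + v` on the
unit cube with ground state energy `0` (so that `q(ψ,Ψ) = 0` for all test functions `ψ`),
then with `m = inf Ψ > 0` one has `‖∇(φ/Ψ)‖² ≤ m⁻² q(φ,φ)` for all `φ`. -/
theorem gradient_bound_by_form {d : ℕ} (v Ψ : (Fin d → ℝ) → ℝ) (hv : Continuous v)
    (hΨ : ContDiff ℝ 2 Ψ)
    (hΨpos : ∀ x ∈ Set.Icc (0 : Fin d → ℝ) 1, 0 < Ψ x)
    (hgs : ∀ ψ : (Fin d → ℝ) → ℝ, ContDiff ℝ 1 ψ →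
      qform (Set.Icc (0 : Fin d → ℝ) 1) v ψ Ψ = 0) :
    0 < sInf (Ψ '' Set.Icc (0 : Fin d → ℝ) 1) ∧
    ∀ φ : (Fin d → ℝ) → ℝ, ContDiff ℝ 1 φ →
      (∫ x in Set.Icc (0 : Fin d → ℝ) 1, gradSqd (fun y => φ y / Ψ y) x)
        ≤ ((sInf (Ψ '' Set.Icc (0 : Fin d → ℝ) 1)) ^ 2)⁻¹ *
            qform (Set.Icc (0 : Fin d → ℝ) 1) v φ φ := by
  set K : Set (Fin d → ℝ) := Set.Icc 0 1 with hKdef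
  set m : ℝ := sInf (Ψ '' K) with hmdef
  have hKc : IsCompact K := isCompact_Icc
  have hKne : K.Nonempty := Set.nonempty_Icc.2 zero_le_one
  have hKm : MeasurableSet K := measurableSet_Icc
  have himc : IsCompact (Ψ '' K) := hKc.image hΨ.continuous
  have hmK : m ∈ Ψ '' K := himc.sInf_mem (hKne.image Ψ)
  have hm : 0 < m := by
    obtain ⟨x₀, hx₀, hx₀e⟩ := hmK
    rw [← hx₀e]; exact hΨpos x₀ hx₀
  have hle : ∀ x ∈ K, m ≤ Ψ x := fun x hx =>
    csInf_le himc.bddBelow (Set.mem_image_of_mem Ψ hx)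
  have hΨne : ∀ x ∈ K, Ψ x ≠ 0 := fun x hx => (hΨpos x hx).ne'
  refine ⟨hm, fun φ hφ => ?_⟩
  -- the test function
  set ψ : (Fin d → ℝ) → ℝ := fun y => φ y * φ y * rho m (Ψ y) with hψdef
  have hψC : ContDiff ℝ 1 ψ :=
    (hφ.mul hφ).mul ((rho_contDiff hm).comp (hΨ.of_le one_le_two))
  have hq0 : qform K v ψ Ψ = 0 := hgs ψ hψC
  -- the continuous representative of the gradient of φ/Ψ
  set E : Fin d → (Fin d → ℝ) → ℝ :=
    fun i x => (1 / Ψ x) * pd i φ x - (φ x / Ψ x ^ 2) * pd i Ψ x with hEdef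
  set G : (Fin d → ℝ) → ℝ := fun x => ∑ i : Fin d, (E i x) ^ 2 with hGdef
  have hΨ1 : ContDiff ℝ 1 Ψ := hΨ.of_le one_le_two
  have hEc : ∀ i, ContinuousOn (E i) K := by
    intro i
    apply ContinuousOn.sub
    · exact (continuousOn_const.div hΨ.continuous.continuousOn hΨne).mul
        (pd_cont i hφ).continuousOn
    · exact (hφ.continuous.continuousOn.div
        ((hΨ.continuous.pow 2).continuousOn)
        (fun x hx => pow_ne_zero 2 (hΨne x hx))).mul (pd_cont i hΨ1).continuousOn
  have hGc : ContinuousOn G K := by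
    apply continuousOn_finset_sum
    intro i _
    exact (hEc i).pow 2
  have hG0 : ∀ x, 0 ≤ G x := fun x => Finset.sum_nonneg fun i _ => sq_nonneg _
  -- integrands
  set Iφ : (Fin d → ℝ) → ℝ :=
    fun x => (∑ i : Fin d, pd i φ x * pd i φ x) + v x * φ x * φ x with hIφdef
  set Iψ : (Fin d → ℝ) → ℝ :=
    fun x => (∑ i : Fin d, pd i ψ x * pd i Ψ x) + v x * ψ x * Ψ x with hIψdef
  have hIφc : Continuous Iφ :=
    (continuous_finset_sum _ fun i _ => (pd_cont i hφ).mul (pd_cont i hφ)).add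
      ((hv.mul hφ.continuous).mul hφ.continuous)
  have hIψc : Continuous Iψ :=
    (continuous_finset_sum _ fun i _ => (pd_cont i hψC).mul (pd_cont i hΨ1)).add
      ((hv.mul hψC.continuous).mul hΨ.continuous)
  -- key pointwise identity
  have key : ∀ x ∈ K, Iφ x = Ψ x ^ 2 * G x + Iψ x := by
    intro x hx
    have hΨx : 0 < Ψ x := hΨpos x hx
    have hmle : m ≤ Ψ x := hle x hx
    have hrv : rho m (Ψ x) = (Ψ x)⁻¹ := rho_eq hm hmle
    have hrv' : rho' m (Ψ x) = -(Ψ x ^ 2)⁻¹ := rho'_eq hmle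
    have hterm : ∀ i ∈ Finset.univ, pd i φ x * pd i φ x
        = Ψ x ^ 2 * (E i x) ^ 2 + pd i ψ x * pd i Ψ x := by
      intro i _
      rw [hψdef]
      rw [pd_psi i hφ hΨ hm x, hrv, hrv', hEdef]
      field_simp
      ring
    have hvψ : v x * ψ x * Ψ x = v x * φ x * φ x := by
      rw [hψdef]
      simp only [hrv]
      field_simp
    show (∑ i : Fin d, pd i φ x * pd i φ x) + v x * φ x * φ x
        = Ψ x ^ 2 * (∑ i : Fin d, (E i x) ^ 2)
          + ((∑ i : Fin d, pd i ψ x * pd i Ψ x) + v x * ψ x * Ψ x)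
    rw [Finset.sum_congr rfl hterm, Finset.sum_add_distrib, Finset.mul_sum, hvψ]
    ring
  -- integrability
  have hIφi : IntegrableOn Iφ K := hIφc.continuousOn.integrableOn_compact hKc
  have hIψi : IntegrableOn Iψ K := hIψc.continuousOn.integrableOn_compact hKc
  have hGi : IntegrableOn G K := hGc.integrableOn_compact hKc
  have hΨGc : ContinuousOn (fun x => Ψ x ^ 2 * G x) K :=
    ((hΨ.continuous.pow 2).continuousOn).mul hGc
  have hΨGi : IntegrableOn (fun x => Ψ x ^ 2 * G x) K := hΨGc.integrableOn_compact hKc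
  -- integral identity
  have hint1 : (∫ x in K, Ψ x ^ 2 * G x) = qform K v φ φ := by
    have h1 : (∫ x in K, Ψ x ^ 2 * G x) = ∫ x in K, (Iφ x - Iψ x) :=
      setIntegral_congr_fun hKm (fun x hx => by rw [key x hx]; ring)
    rw [h1, integral_sub hIφi hIψi]
    have h2 : qform K v ψ Ψ = ∫ x in K, Iψ x := rfl
    have h3 : qform K v φ φ = ∫ x in K, Iφ x := rfl
    rw [h3, ← h2, hq0, sub_zero]
  -- final chain
  have hstep1 : (∫ x in K, gradSqd (fun y => φ y / Ψ y) x) = ∫ x in K, G x := by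
    apply setIntegral_congr_fun hKm
    intro x hx
    simp only [gradSqd, hGdef]
    refine Finset.sum_congr rfl fun i _ => ?_
    rw [pd_div i hφ hΨ (hΨne x hx), hEdef]
  have hstep2 : (∫ x in K, G x) ≤ ∫ x in K, (m ^ 2)⁻¹ * (Ψ x ^ 2 * G x) := by
    apply setIntegral_mono_on hGi (hΨGi.const_mul _) hKm
    intro x hx
    have hmm : m ^ 2 ≤ Ψ x ^ 2 := pow_le_pow_left₀ hm.le (hle x hx) 2
    calc G x = (m ^ 2)⁻¹ * (m ^ 2 * G x) := by
          field_simp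
      _ ≤ (m ^ 2)⁻¹ * (Ψ x ^ 2 * G x) := by
          apply mul_le_mul_of_nonneg_left
            (mul_le_mul_of_nonneg_right hmm (hG0 x)) (by positivity)
  calc (∫ x in K, gradSqd (fun y => φ y / Ψ y) x) = ∫ x in K, G x := hstep1
    _ ≤ ∫ x in K, (m ^ 2)⁻¹ * (Ψ x ^ 2 * G x) := hstep2
    _ = (m ^ 2)⁻¹ * ∫ x in K, Ψ x ^ 2 * G x := integral_const_mul _ _
    _ = (m ^ 2)⁻¹ * qform K v φ φ := by rw [hint1]
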